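/- Let R be a finite commutative ring. Then the number of units of R equals |R| · ∏_m (1 - 1/|R/m|), where the product runs over all maximal ideals m of R. -/

import Mathlib

/-- Units of a pi type. -/
def myPiUnits {ι : Type*} (M : ι → Type*) [∀ i, Monoid (M i)] :
    (∀ i, M i)ˣ ≃* ∀ i, (M i)ˣ where
  toFun u i := ⟨u.val i, u.inv i, congrFun u.val_inv i, congrFun u.inv_val i⟩
  invFun f := ⟨fun i => (f i).val, fun i => (f i).inv,
    funext fun i => (f i).val_inv, funext fun i => (f i).inv_val⟩
  left_inv u := by ext i; rfl
  right_inv f := by ext i; rfl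
  map_mul' u v := by ext i; rfl

/-- For a finite commutative ring `R`,
`|Rˣ| = |R| · ∏_{m maximal} (1 - 1/|R/m|)`. -/
theorem stmt_3 {R : Type*} [CommRing R] [Fintype R] :
    (Nat.card Rˣ : ℚ) =
      (Nat.card R : ℚ) *
        ∏ᶠ m ∈ {m : Ideal R | m.IsMaximal}, (1 - 1 / (Nat.card (R ⧸ m) : ℚ)) := by
  classical
  set N : Ideal R := nilradical R with hN
  have hNnil : IsNilpotent N := IsNoetherianRing.isNilpotent_nilradical R
  -- the units map
  let φ : Rˣ →* (R ⧸ N)ˣ := Units.map (Ideal.Quotient.mk N : R →+* R ⧸ N).toMonoidHom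
  have hφsurj : Function.Surjective φ := by
    intro u
    obtain ⟨x, hx⟩ := Ideal.Quotient.mk_surjective (u : R ⧸ N)
    have hux : IsUnit x := by
      rw [← IsNilpotent.isUnit_quotient_mk_iff hNnil, hx]
      exact u.isUnit
    refine ⟨hux.unit, ?_⟩
    ext
    simp [φ, hx]
  -- kernel of φ is in bijection with N
  have hker : Nat.card (MonoidHom.ker φ) = Nat.card N := by
    refine Nat.card_eq_of_bijective
      (fun u => (⟨(u : Rˣ).val - 1, ?_⟩ : N)) ⟨?_, ?_⟩
    · have hu : (Ideal.Quotient.mk N) ((u : Rˣ).val) = (Ideal.Quotient.mk N) 1 := by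
        have h2 := congrArg Units.val (MonoidHom.mem_ker.mp u.2)
        simpa [φ] using h2
      simpa using Ideal.Quotient.eq.mp hu
    · intro u v huv
      have h1 : ((u : Rˣ) : R) - 1 = ((v : Rˣ) : R) - 1 := congrArg Subtype.val huv
      have h2 : ((u : Rˣ) : R) = ((v : Rˣ) : R) := by linear_combination h1
      exact Subtype.ext (Units.ext h2)
    · rintro ⟨n, hn⟩
      have hu : IsUnit (n + 1) :=
        IsNilpotent.isUnit_add_one (mem_nilradical.mp hn)
      have hmem : hu.unit ∈ MonoidHom.ker φ := by
        rw [MonoidHom.mem_ker]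
        ext
        show (Ideal.Quotient.mk N) (hu.unit : R) = 1
        rw [IsUnit.unit_spec, map_add, Ideal.Quotient.eq_zero_iff_mem.mpr hn, map_one, zero_add]
      refine ⟨⟨hu.unit, hmem⟩, ?_⟩
      ext
      show (hu.unit : R) - 1 = n
      rw [IsUnit.unit_spec]; ring
  -- card of units
  have hcard_units : Nat.card Rˣ = Nat.card (R ⧸ N)ˣ * Nat.card N := by
    rw [Subgroup.card_eq_card_quotient_mul_card_subgroup (MonoidHom.ker φ), hker,
      Nat.card_congr (QuotientGroup.quotientKerEquivOfSurjective φ hφsurj).toEquiv]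
  -- card of R
  have hcard_R : Nat.card R = Nat.card (R ⧸ N) * Nat.card N := by
    rw [Submodule.card_eq_card_quotient_mul_card N, mul_comm]
  -- CRT
  have hfin : Finite {I : Ideal R | I.IsMaximal} := Finite.of_equiv (MaximalSpectrum R) (MaximalSpectrum.equivSubtype R)
  have : Fintype {I : Ideal R | I.IsMaximal} := Fintype.ofFinite _
  let e := IsArtinianRing.quotNilradicalEquivPi R
  have hcardq : Nat.card (R ⧸ N) =
      ∏ i : {I : Ideal R | I.IsMaximal}, Nat.card (R ⧸ i.1) := by
    have : Fintype (MaximalSpectrum R) := Fintype.ofFinite _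
    rw [Nat.card_congr e.toEquiv, Nat.card_pi]
    convert Fintype.prod_equiv (MaximalSpectrum.equivSubtype R) (fun a : MaximalSpectrum R => Nat.card (R ⧸ a.asIdeal))
      (fun i : {I : Ideal R | I.IsMaximal} => Nat.card (R ⧸ i.1)) (fun _ => rfl)
    exact Iff.rfl
  have hcardu : Nat.card (R ⧸ N)ˣ =
      ∏ i : {I : Ideal R | I.IsMaximal}, (Nat.card (R ⧸ i.1) - 1) := by
    have e2 : (R ⧸ N)ˣ ≃* (∀ i : {I : Ideal R | I.IsMaximal}, R ⧸ i.1)ˣ :=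
      Units.mapEquiv (e.toRingEquiv.trans (RingEquiv.piCongrLeft
        (fun i : {I : Ideal R | I.IsMaximal} => R ⧸ i.1) (MaximalSpectrum.equivSubtype R))).toMulEquiv
    rw [Nat.card_congr e2.toEquiv,
      Nat.card_congr (myPiUnits (fun i : {I : Ideal R | I.IsMaximal} => R ⧸ i.1)).toEquiv,
      Nat.card_pi]
    refine Finset.prod_congr rfl fun i _ => ?_
    have hi : i.1.IsMaximal := i.2
    letI : Field (R ⧸ i.1) := Ideal.Quotient.field i.1
    exact Nat.card_units (R ⧸ i.1)
  -- positivity of residue field cardinalities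
  have hqpos : ∀ i : {I : Ideal R | I.IsMaximal}, 0 < Nat.card (R ⧸ i.1) := by
    intro i
    have : i.1.IsMaximal := i.2
    have : Finite (R ⧸ i.1) := Quotient.finite _
    have : Nontrivial (R ⧸ i.1) := Ideal.Quotient.nontrivial_iff.mpr (by exact ‹i.1.IsMaximal›.ne_top)
    exact Nat.card_pos
  -- rewrite the finprod as a finite product over the subtype
  have hfp : ∏ᶠ m ∈ {m : Ideal R | m.IsMaximal}, (1 - 1 / (Nat.card (R ⧸ m) : ℚ)) =
      ∏ i : {I : Ideal R | I.IsMaximal}, (1 - 1 / (Nat.card (R ⧸ i.1) : ℚ)) := by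
    rw [← finprod_set_coe_eq_finprod_mem, finprod_eq_prod_of_fintype]
  have key : ∀ i : {I : Ideal R | I.IsMaximal},
      ((Nat.card (R ⧸ i.1) - 1 : ℕ) : ℚ) =
        (Nat.card (R ⧸ i.1) : ℚ) * (1 - 1 / (Nat.card (R ⧸ i.1) : ℚ)) := by
    intro i
    have h0 : (Nat.card (R ⧸ i.1) : ℚ) ≠ 0 := by
      exact_mod_cast (hqpos i).ne'
    rw [Nat.cast_pred (hqpos i), mul_sub, mul_one, mul_one_div, div_self h0]
  rw [hfp, hcard_units, hcard_R, hcardq, hcardu]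
  push_cast
  rw [Finset.prod_congr rfl (fun i _ => key i), Finset.prod_mul_distrib]
  ring
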